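/- arXiv:1810.04725 — 2 statements merged into one kernel-verified Lean document; each statement's English description precedes it below -/
import Mathlib

section
/- Let φ : ℝ → ℝ be continuously differentiable with φ(t) = 0 for t ∉ (0,1) and with derivative φ' Lipschitz. Define φ_1(t) = ∫_t^1 φ'(u) φ'(u−t) du for t ∈ [0,1] and φ_1(t) = 0 for t > 1. Then there is a constant K depending only on φ such that for every integer l_n ≥ 2 and every integer s with 0 ≤ s ≤ l_n, | l_n Σ_{v ∈ ℤ} ( φ((v+1)/l_n) − φ(v/l_n) ) ( φ((v−s+1)/l_n) − φ((v−s)/l_n) ) − φ_1(s/l_n) | ≤ K / l_n. (The sum has only finitely many nonzero terms since φ vanishes outside (0,1).) -/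
open MeasureTheory


lemma aux_abs_zero {L x : ℝ} (hL : 0 ≤ L) (h : ∀ ε : ℝ, 0 < ε → |x| ≤ L * ε) : x = 0 := by
  rcases eq_or_lt_of_le hL with hL' | hL'
  · have := h 1 one_pos
    rw [← hL'] at this
    simpa [abs_nonpos_iff] using this
  · by_contra hne
    have hpos : 0 < |x| := abs_pos.mpr hne
    have h2 := h (|x| / (2 * L)) (by positivity)
    rw [show L * (|x| / (2 * L)) = |x| / 2 by field_simp] at h2
    linarith

lemma aux_int (ψ : ℝ → ℝ) (L : ℝ) (hL : 0 ≤ L) (hcont : Continuous ψ)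
    (hlip : ∀ a b : ℝ, |ψ a - ψ b| ≤ L * |a - b|) (c δ : ℝ) (hδ : 0 ≤ δ) :
    |(∫ u in c..(c + δ), ψ u) - ψ c * δ| ≤ L * δ ^ 2 := by
  have h1 : ψ c * δ = ∫ _ in c..(c + δ), ψ c := by
    rw [intervalIntegral.integral_const, smul_eq_mul]; ring
  rw [h1, ← intervalIntegral.integral_sub (hcont.intervalIntegrable _ _)
    intervalIntegrable_const]
  have hb : ∀ x ∈ Set.uIoc c (c + δ), ‖ψ x - ψ c‖ ≤ L * δ := by
    intro x hx
    rw [Set.uIoc_of_le (by linarith)] at hx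
    rw [Real.norm_eq_abs]
    refine (hlip x c).trans ?_
    have : |x - c| ≤ δ := by
      rw [abs_le]
      constructor <;> linarith [hx.1, hx.2]
    exact mul_le_mul_of_nonneg_left this hL
  have := intervalIntegral.norm_integral_le_of_norm_le_const hb
  rw [Real.norm_eq_abs] at this
  refine this.trans ?_
  rw [show c + δ - c = δ by ring, abs_of_nonneg hδ]
  nlinarith

lemma aux_perterm (x y A B H L δ : ℝ) (hL : 0 ≤ L) (hδ : 0 < δ) (hδ1 : δ ≤ 1)
    (hx : |x| ≤ L) (hy : |y| ≤ L)
    (hA : |A - x * δ| ≤ L * δ ^ 2) (hB : |B - y * δ| ≤ L * δ ^ 2)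
    (hH : |H - x * y * δ| ≤ 2 * L ^ 2 * δ ^ 2) :
    |(1 / δ) * (A * B) - H| ≤ 5 * L ^ 2 * δ ^ 2 := by
  have h1 : (1 / δ) * (A * B) - H =
      (1 / δ) * ((A - x * δ) * (B - y * δ)) + x * (B - y * δ) + y * (A - x * δ)
        + (x * y * δ - H) := by
    field_simp
    ring
  rw [h1]
  have e1 : |(1 / δ) * ((A - x * δ) * (B - y * δ))| ≤ L ^ 2 * δ ^ 2 := by
    rw [abs_mul, abs_mul, abs_of_pos (by positivity : (0:ℝ) < 1 / δ)]
    have := mul_le_mul hA hB (abs_nonneg _) (by positivity)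
    calc 1 / δ * (|A - x * δ| * |B - y * δ|) ≤ 1 / δ * (L * δ ^ 2 * (L * δ ^ 2)) := by
          exact mul_le_mul_of_nonneg_left this (by positivity)
      _ = L ^ 2 * δ ^ 3 := by field_simp
      _ ≤ L ^ 2 * δ ^ 2 := by
          nlinarith [mul_nonneg (mul_nonneg (sub_nonneg.mpr hδ1) (sq_nonneg δ)) (sq_nonneg L)]
  have e2 : |x * (B - y * δ)| ≤ L ^ 2 * δ ^ 2 := by
    rw [abs_mul]
    calc |x| * |B - y * δ| ≤ L * (L * δ ^ 2) :=
          mul_le_mul hx hB (abs_nonneg _) hL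
      _ = L ^ 2 * δ ^ 2 := by ring
  have e3 : |y * (A - x * δ)| ≤ L ^ 2 * δ ^ 2 := by
    rw [abs_mul]
    calc |y| * |A - x * δ| ≤ L * (L * δ ^ 2) :=
          mul_le_mul hy hA (abs_nonneg _) hL
      _ = L ^ 2 * δ ^ 2 := by ring
  have e4 : |x * y * δ - H| ≤ 2 * L ^ 2 * δ ^ 2 := by
    rw [abs_sub_comm]; exact hH
  have habs : ∀ a b c d : ℝ, |a + b + c + d| ≤ |a| + |b| + |c| + |d| := by
    intro a b c d
    have h1 := abs_add_le (a + b + c) d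
    have h2 := abs_add_le (a + b) c
    have h3 := abs_add_le a b
    linarith
  linarith [habs ((1 / δ) * ((A - x * δ) * (B - y * δ))) (x * (B - y * δ)) (y * (A - x * δ))
    (x * y * δ - H)]

/-- Discrete approximation of the kernel `φ₁(t) = ∫_t^1 φ'(u) φ'(u-t) du`:
for a `C¹` weight `φ` supported in `(0,1)` with Lipschitz derivative `φ'`,
there is a constant `K` (depending only on `φ`) such that for all integers `l ≥ 2`
and `0 ≤ s ≤ l`,
`| l Σ_{v ∈ ℤ} (φ((v+1)/l) - φ(v/l)) (φ((v-s+1)/l) - φ((v-s)/l)) - φ₁(s/l) | ≤ K / l`.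
The sum over `ℤ` has finitely many nonzero terms and is expressed with `finsum`. -/
theorem stmt_4 (φ φ' : ℝ → ℝ) (L : ℝ)
    (hderiv : ∀ t : ℝ, HasDerivAt φ (φ' t) t)
    (hlip : ∀ a b : ℝ, |φ' a - φ' b| ≤ L * |a - b|)
    (hsupp : ∀ t : ℝ, t ∉ Set.Ioo (0 : ℝ) 1 → φ t = 0)
    (φ₁ : ℝ → ℝ)
    (hφ₁ : ∀ t ∈ Set.Icc (0 : ℝ) 1, φ₁ t = ∫ u in t..(1 : ℝ), φ' u * φ' (u - t))
    (hφ₁' : ∀ t : ℝ, 1 < t → φ₁ t = 0) :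
    ∃ K : ℝ, ∀ l : ℕ, 2 ≤ l → ∀ s : ℕ, s ≤ l →
      |(l : ℝ) * (∑ᶠ v : ℤ,
            (φ (((v : ℝ) + 1) / l) - φ ((v : ℝ) / l)) *
              (φ (((v : ℝ) - s + 1) / l) - φ (((v : ℝ) - s) / l)))
          - φ₁ ((s : ℝ) / l)| ≤ K / l := by
  classical
  have hL0 : 0 ≤ L := by
    have h := hlip 0 1
    rw [show (0:ℝ) - 1 = -1 by ring, abs_neg, abs_one, mul_one] at h
    linarith [abs_nonneg (φ' 0 - φ' 1)]
  have hstrict : ∀ t : ℝ, t < 0 ∨ 1 < t → φ' t = 0 := by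
    intro t ht
    have hev : φ =ᶠ[nhds t] (fun _ => (0:ℝ)) := by
      rcases ht with ht | ht
      · filter_upwards [Iio_mem_nhds ht] with u hu
        exact hsupp u (fun hmem => absurd hmem.1 (by simp only [Set.mem_Iio] at hu; linarith))
      · filter_upwards [Ioi_mem_nhds ht] with u hu
        exact hsupp u (fun hmem => absurd hmem.2 (by simp only [Set.mem_Ioi] at hu; linarith))
    have h0 : HasDerivAt φ 0 t := by
      have : HasDerivAt (fun _ : ℝ => (0:ℝ)) 0 t := hasDerivAt_const t 0
      exact HasDerivAt.congr_of_eventuallyEq this hev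
    exact (hderiv t).unique h0
  have hzero : ∀ t : ℝ, t ≤ 0 ∨ 1 ≤ t → φ' t = 0 := by
    intro t ht
    apply aux_abs_zero hL0
    intro ε hε
    rcases ht with ht | ht
    · have h1 : φ' (t - ε) = 0 := hstrict _ (Or.inl (by linarith))
      have h2 := hlip t (t - ε)
      rw [h1, sub_zero, show t - (t - ε) = ε by ring, abs_of_pos hε] at h2
      exact h2
    · have h1 : φ' (t + ε) = 0 := hstrict _ (Or.inr (by linarith))
      have h2 := hlip t (t + ε)
      rw [h1, sub_zero, show t - (t + ε) = -ε by ring, abs_neg, abs_of_pos hε] at h2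
      exact h2
  have hM : ∀ t : ℝ, |φ' t| ≤ L := by
    intro t
    rcases le_or_gt t 0 with ht | ht
    · rw [hzero t (Or.inl ht), abs_zero]; exact hL0
    rcases le_or_gt 1 t with ht1 | ht1
    · rw [hzero t (Or.inr ht1), abs_zero]; exact hL0
    · have h := hlip t 0
      rw [hzero 0 (Or.inl le_rfl), sub_zero, sub_zero, abs_of_pos ht] at h
      nlinarith
  have hcont : Continuous φ' := by
    have : LipschitzWith ⟨L, hL0⟩ φ' := by
      apply LipschitzWith.of_dist_le_mul
      intro x y
      rw [Real.dist_eq, Real.dist_eq]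
      exact hlip x y
    exact this.continuous
  have hFTC : ∀ a b : ℝ, φ b - φ a = ∫ u in a..b, φ' u := by
    intro a b
    exact (intervalIntegral.integral_eq_sub_of_hasDerivAt (fun u _ => hderiv u)
      (hcont.intervalIntegrable a b)).symm
  refine ⟨5 * L ^ 2, ?_⟩
  intro l hl s hs
  have hlN : (0:ℕ) < l := by omega
  have hl0 : (0:ℝ) < l := by exact_mod_cast hlN
  have hlne : (l:ℝ) ≠ 0 := ne_of_gt hl0
  set δ : ℝ := 1 / l with hδdef
  have hδ0 : 0 < δ := by positivity
  have hδ1 : δ ≤ 1 := by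
    rw [hδdef, div_le_one hl0]
    exact_mod_cast (by omega : 1 ≤ l)
  set h : ℝ := (s:ℝ) / l with hh
  have hh0 : 0 ≤ h := by positivity
  have hh1 : h ≤ 1 := by
    rw [hh, div_le_one hl0]
    exact_mod_cast hs
  have hψlip : ∀ a b : ℝ, |φ' (a - h) - φ' (b - h)| ≤ L * |a - b| := by
    intro a b
    have := hlip (a - h) (b - h)
    rwa [sub_sub_sub_cancel_right] at this
  have hψcont : Continuous (fun u : ℝ => φ' (u - h)) :=
    hcont.comp (continuous_id.sub continuous_const)
  have hprodlip : ∀ a b : ℝ, |φ' a * φ' (a - h) - φ' b * φ' (b - h)| ≤ 2 * L ^ 2 * |a - b| := by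
    intro a b
    have e : φ' a * φ' (a - h) - φ' b * φ' (b - h)
        = φ' a * (φ' (a - h) - φ' (b - h)) + φ' (b - h) * (φ' a - φ' b) := by ring
    rw [e]
    have b1 : |φ' a * (φ' (a - h) - φ' (b - h))| ≤ L * (L * |a - b|) := by
      rw [abs_mul]
      exact mul_le_mul (hM a) (hψlip a b) (abs_nonneg _) hL0
    have b2 : |φ' (b - h) * (φ' a - φ' b)| ≤ L * (L * |a - b|) := by
      rw [abs_mul]
      exact mul_le_mul (hM _) (hlip a b) (abs_nonneg _) hL0
    have e2 : 2 * L ^ 2 * |a - b| = L * (L * |a - b|) + L * (L * |a - b|) := by ring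
    rw [e2]
    linarith [abs_add_le (φ' a * (φ' (a - h) - φ' (b - h))) (φ' (b - h) * (φ' a - φ' b))]
  have hprodcont : Continuous (fun u : ℝ => φ' u * φ' (u - h)) := hcont.mul hψcont
  -- notation for the summand
  set f : ℤ → ℝ := fun v =>
    (φ (((v : ℝ) + 1) / l) - φ ((v : ℝ) / l)) *
      (φ (((v : ℝ) - s + 1) / l) - φ (((v : ℝ) - s) / l)) with hf
  -- step A: reduce the finsum to a finite sum over range l
  have hsub : Function.support f ⊆
      ↑((Finset.range l).map ⟨(Nat.cast : ℕ → ℤ), fun a b hab => by exact_mod_cast hab⟩) := by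
    intro v hv
    have hfac : φ (((v : ℝ) + 1) / l) - φ ((v : ℝ) / l) ≠ 0 := left_ne_zero_of_mul hv
    have hvb : (0:ℤ) ≤ v ∧ v < (l:ℤ) := by
      have hcases : φ (((v : ℝ) + 1) / l) ≠ 0 ∨ φ ((v : ℝ) / l) ≠ 0 := by
        by_contra hc
        push_neg at hc
        rw [hc.1, hc.2, sub_self] at hfac
        exact hfac rfl
      rcases hcases with hne | hne
      · have hmem : ((v : ℝ) + 1) / l ∈ Set.Ioo (0:ℝ) 1 := by
          by_contra hm; exact hne (hsupp _ hm)
        have h2 : (v:ℝ) + 1 < l := by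
          have := (div_lt_one hl0).mp hmem.2
          linarith
        have h1 : (0:ℝ) < (v:ℝ) + 1 := by
          rcases div_pos_iff.mp hmem.1 with h | h
          · exact h.1
          · linarith [h.2]
        constructor
        · have : (0:ℤ) < v + 1 := by exact_mod_cast h1
          omega
        · have : v + 1 < (l:ℤ) := by exact_mod_cast h2
          omega
      · have hmem : (v : ℝ) / l ∈ Set.Ioo (0:ℝ) 1 := by
          by_contra hm; exact hne (hsupp _ hm)
        have h2 : (v:ℝ) < l := by
          have := (div_lt_one hl0).mp hmem.2
          linarith
        have h1 : (0:ℝ) < (v:ℝ) := by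
          rcases div_pos_iff.mp hmem.1 with h | h
          · exact h.1
          · linarith [h.2]
        constructor
        · have : (0:ℤ) < v := by exact_mod_cast h1
          omega
        · exact_mod_cast h2
    refine Finset.mem_coe.mpr (Finset.mem_map.mpr ⟨v.toNat, Finset.mem_range.mpr ?_, ?_⟩)
    · omega
    · show ((v.toNat : ℕ) : ℤ) = v
      omega
  have hsum1 : (∑ᶠ v : ℤ, f v) = ∑ n ∈ Finset.range l, f (n : ℤ) := by
    rw [finsum_eq_finset_sum_of_support_subset f hsub, Finset.sum_map]
    rfl
  -- the three interval quantities
  set A : ℕ → ℝ := fun n => ∫ u in ((n:ℝ)/l)..((n:ℝ)/l + δ), φ' u with hA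
  set B : ℕ → ℝ := fun n => ∫ u in ((n:ℝ)/l)..((n:ℝ)/l + δ), φ' (u - h) with hB
  set H : ℕ → ℝ := fun n => ∫ u in ((n:ℝ)/l)..((n:ℝ)/l + δ), φ' u * φ' (u - h) with hHdef
  have hterm : ∀ n : ℕ, f (n : ℤ) = A n * B n := by
    intro n
    have e1 : (((n:ℤ):ℝ) + 1) / l = (n:ℝ)/l + δ := by
      push_cast [hδdef]; ring
    have e0 : (((n:ℤ):ℝ)) / l = (n:ℝ)/l := by push_cast; ring
    have eA : φ ((((n:ℤ):ℝ) + 1) / l) - φ (((n:ℤ):ℝ) / l) = A n := by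
      rw [e1, e0, hA, hFTC]
    have eB : φ ((((n:ℤ):ℝ) - s + 1) / l) - φ ((((n:ℤ):ℝ) - s) / l) = B n := by
      have : B n = ∫ u in ((n:ℝ)/l - h)..((n:ℝ)/l + δ - h), φ' u := by
        rw [hB]
        exact intervalIntegral.integral_comp_sub_right φ' h
      rw [this, ← hFTC]
      have e2 : (n:ℝ)/l - h = (((n:ℤ):ℝ) - s) / l := by
        rw [hh]; push_cast; ring
      have e3 : (n:ℝ)/l + δ - h = (((n:ℤ):ℝ) - s + 1) / l := by
        rw [hh, hδdef]; push_cast; ring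
      rw [e2, e3]
    rw [hf]
    simp only []
    rw [eA, eB]
  -- step C : the sum of the H n equals φ₁ h
  have hφval : φ₁ h = ∑ n ∈ Finset.range l, H n := by
    have hint : ∀ a b : ℝ, IntervalIntegrable (fun u => φ' u * φ' (u - h)) volume a b :=
      fun a b => hprodcont.intervalIntegrable a b
    have h01 : ∑ n ∈ Finset.range l, H n = ∫ u in (0:ℝ)..1, φ' u * φ' (u - h) := by
      have hadj := intervalIntegral.sum_integral_adjacent_intervals
        (a := fun i : ℕ => (i:ℝ)/l) (n := l) (μ := volume)
        (f := fun u => φ' u * φ' (u - h)) (fun k _ => hint _ _)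
      simp only [Nat.cast_zero, zero_div, Nat.cast_ofNat] at hadj
      rw [show ((l:ℝ))/l = 1 from div_self hlne] at hadj
      rw [← hadj]
      apply Finset.sum_congr rfl
      intro n _
      rw [hHdef]
      simp only []
      congr 1
      push_cast [hδdef]
      ring
    have hzero_int : ∫ u in (0:ℝ)..h, φ' u * φ' (u - h) = 0 := by
      rw [intervalIntegral.integral_congr (g := fun _ => (0:ℝ))]
      · simp
      · intro u hu
        rw [Set.uIcc_of_le hh0] at hu
        have : φ' (u - h) = 0 := hzero _ (Or.inl (by linarith [hu.2]))
        simp [this]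
    have hsplit := intervalIntegral.integral_add_adjacent_intervals
      (a := (0:ℝ)) (b := h) (c := 1) (hint 0 h) (hint h 1)
    rw [hφ₁ h ⟨hh0, hh1⟩, h01]
    rw [hzero_int] at hsplit
    linarith
  -- assemble
  rw [hsum1, hφval, Finset.mul_sum, ← Finset.sum_sub_distrib]
  have hper : ∀ n ∈ Finset.range l, |(l:ℝ) * f (n:ℤ) - H n| ≤ 5 * L ^ 2 * δ ^ 2 := by
    intro n _
    rw [hterm n]
    set c : ℝ := (n:ℝ)/l with hc
    have hAe : |A n - φ' c * δ| ≤ L * δ ^ 2 := aux_int φ' L hL0 hcont hlip c δ hδ0.le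
    have hBe : |B n - φ' (c - h) * δ| ≤ L * δ ^ 2 :=
      aux_int (fun u => φ' (u - h)) L hL0 hψcont hψlip c δ hδ0.le
    have hHe : |H n - φ' c * φ' (c - h) * δ| ≤ 2 * L ^ 2 * δ ^ 2 :=
      aux_int (fun u => φ' u * φ' (u - h)) (2 * L ^ 2) (by positivity) hprodcont hprodlip c δ hδ0.le
    have hl1δ : (l:ℝ) = 1 / δ := by
      rw [hδdef, one_div_one_div]
    rw [hl1δ]
    exact aux_perterm (φ' c) (φ' (c - h)) (A n) (B n) (H n) L δ hL0 hδ0 hδ1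
      (hM c) (hM (c - h)) hAe hBe hHe
  calc |∑ n ∈ Finset.range l, ((l:ℝ) * f (n:ℤ) - H n)|
      ≤ ∑ n ∈ Finset.range l, |(l:ℝ) * f (n:ℤ) - H n| := Finset.abs_sum_le_sum_abs _ _
    _ ≤ ∑ _n ∈ Finset.range l, 5 * L ^ 2 * δ ^ 2 := Finset.sum_le_sum hper
    _ = (l:ℝ) * (5 * L ^ 2 * δ ^ 2) := by
        rw [Finset.sum_const, Finset.card_range, nsmul_eq_mul]
    _ = 5 * L ^ 2 / l := by
        rw [hδdef]; field_simp
end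

section
/- Let f_1, f_2 : [0,∞) → ℝ be Lipschitz functions with f_1(t) = f_2(t) = 0 for t ≥ 1, and set Φ = ∫_0^1 f_1(s) f_2(s) ds and Ψ = ∫_0^1 s f_1(s) f_2(s) ds. Then there is a constant K depending only on f_1 and f_2 such that for all integers p ≥ 1, l_n ≥ 2 and every integer i ≥ 0, | Σ_{h=i}^{i+p l_n−2} Σ_{h'=h+1}^{i+p l_n−1} f_1((h'−h)/l_n) f_2((h'−h)/l_n) − l_n² ( p Φ − Ψ ) | ≤ K p l_n. -/
open MeasureTheory

lemma sum_range_sum_range (a : ℕ → ℝ) (n : ℕ) :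
    ∑ m ∈ Finset.range n, ∑ j ∈ Finset.range (m+1), a j
      = ∑ j ∈ Finset.range n, ((n - j : ℕ) : ℝ) * a j := by
  induction n with
  | zero => simp
  | succ n ih =>
    rw [Finset.sum_range_succ, ih,
      Finset.sum_range_succ (fun j => ((n+1-j : ℕ) : ℝ) * a j)]
    have h1 : ∑ j ∈ Finset.range n, ((n+1-j:ℕ):ℝ) * a j
        = ∑ j ∈ Finset.range n, (((n-j:ℕ):ℝ) * a j + a j) := by
      refine Finset.sum_congr rfl fun j hj => ?_
      have hj' := Finset.mem_range.1 hj
      have h2 : (n+1-j) = (n-j)+1 := by omega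
      rw [h2]; push_cast; ring
    rw [h1, Finset.sum_add_distrib, Finset.sum_range_succ a n]
    have h3 : n + 1 - n = 1 := by omega
    rw [h3]
    push_cast
    ring

lemma double_sum_eq (G : ℝ → ℝ) (i N : ℕ) (hN : 2 ≤ N) :
    ∑ h ∈ Finset.Icc i (i + N - 2), ∑ h' ∈ Finset.Icc (h + 1) (i + N - 1),
        G ((h' : ℝ) - h)
      = ∑ j ∈ Finset.range (N-1), ((N-1-j : ℕ) : ℝ) * G ((j:ℝ)+1) := by
  set A : ℕ → ℝ := fun m => ∑ j ∈ Finset.range m, G ((j:ℝ)+1) with hA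
  have step1 : ∑ h ∈ Finset.Icc i (i + N - 2), ∑ h' ∈ Finset.Icc (h + 1) (i + N - 1),
      G ((h' : ℝ) - h) = ∑ h ∈ Finset.Icc i (i + N - 2), A (i + N - 1 - h) := by
    refine Finset.sum_congr rfl fun h hh => ?_
    rw [← Finset.Ico_add_one_right_eq_Icc, Finset.sum_Ico_eq_sum_range]
    have hidx : i + N - 1 + 1 - (h + 1) = i + N - 1 - h := by omega
    rw [hidx]
    refine Finset.sum_congr rfl fun j hj => ?_
    congr 1
    push_cast
    ring
  rw [step1, ← Finset.Ico_add_one_right_eq_Icc, Finset.sum_Ico_eq_sum_range]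
  have hidx2 : i + N - 2 + 1 - i = N - 1 := by omega
  rw [hidx2]
  have step2 : ∑ k ∈ Finset.range (N-1), A (i + N - 1 - (i + k))
      = ∑ k ∈ Finset.range (N-1), A (N - 1 - k) := by
    refine Finset.sum_congr rfl fun k hk => ?_
    congr 1
    omega
  rw [step2]
  have step3 : ∑ k ∈ Finset.range (N-1), A (N - 1 - k)
      = ∑ k ∈ Finset.range (N-1), A (k+1) := by
    have := Finset.sum_range_reflect (fun k => A (k+1)) (N-1)
    rw [← this]
    refine Finset.sum_congr rfl fun k hk => ?_
    have hk' := Finset.mem_range.1 hk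
    congr 1
    omega
  rw [step3]
  exact sum_range_sum_range (fun j => G ((j:ℝ)+1)) (N-1)


lemma riemann_approx (g : ℝ → ℝ) (C : ℝ)
    (hlip : ∀ a b : ℝ, a ∈ Set.Icc (0:ℝ) 1 → b ∈ Set.Icc (0:ℝ) 1 → |g a - g b| ≤ C * |a - b|)
    (l : ℕ) (hl : 1 ≤ l) :
    |(∑ j ∈ Finset.range l, g (((j:ℝ)+1)/l)) - l * ∫ s in (0:ℝ)..1, g s| ≤ C := by
  have hC : 0 ≤ C := by
    have h := hlip 0 1 (by norm_num) (by norm_num)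
    have h0 : |(0:ℝ) - 1| = 1 := by norm_num
    rw [h0, mul_one] at h
    exact le_trans (abs_nonneg _) h
  have hl0 : (0:ℝ) < l := by exact_mod_cast hl
  have hcont : ContinuousOn g (Set.Icc 0 1) := by
    refine LipschitzOnWith.continuousOn (K := C.toNNReal) ?_
    refine LipschitzOnWith.of_dist_le_mul fun x hx y hy => ?_
    rw [Real.dist_eq, Real.dist_eq, Real.coe_toNNReal C hC]
    exact hlip x y hx hy
  -- membership of partition points
  have hmem : ∀ k : ℕ, k ≤ l → (k:ℝ)/l ∈ Set.Icc (0:ℝ) 1 := by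
    intro k hk
    constructor
    · positivity
    · rw [div_le_one hl0]; exact_mod_cast hk
  have hsub : ∀ k : ℕ, k < l → Set.uIcc ((k:ℝ)/l) (((k:ℝ)+1)/l) ⊆ Set.Icc 0 1 := by
    intro k hk
    have hle : (k:ℝ)/l ≤ ((k:ℝ)+1)/l := by gcongr; linarith
    rw [Set.uIcc_of_le hle]
    intro x hx
    have h1 := (hmem k hk.le).1
    have h2 : ((k:ℝ)+1)/l ≤ 1 := by
      have := (hmem (k+1) hk).2
      push_cast at this
      linarith
    exact ⟨le_trans h1 hx.1, le_trans hx.2 h2⟩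
  have hik : ∀ k : ℕ, k < l → IntervalIntegrable g volume ((k:ℝ)/l) (((k:ℝ)+1)/l) := by
    intro k hk
    exact (hcont.mono (hsub k hk)).intervalIntegrable
  have hsum : ∑ k ∈ Finset.range l, ∫ s in ((k:ℝ)/l)..(((k:ℝ)+1)/l), g s
      = ∫ s in (0:ℝ)..1, g s := by
    have h := intervalIntegral.sum_integral_adjacent_intervals
      (a := fun k : ℕ => (k:ℝ)/l) (μ := volume) (n := l) (f := g) ?_
    · have h0 : ((0:ℕ):ℝ)/l = 0 := by simp
      have h1 : ((l:ℕ):ℝ)/(l:ℝ) = 1 := by field_simp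
      rw [h0, h1] at h
      rw [← h]
      refine Finset.sum_congr rfl fun k hk => ?_
      congr 1
      push_cast
      ring
    · intro k hk
      have := hik k hk
      convert this using 2
      push_cast
      ring
  have key : ∀ k ∈ Finset.range l,
      |g (((k:ℝ)+1)/l) - l * ∫ s in ((k:ℝ)/l)..(((k:ℝ)+1)/l), g s| ≤ C/l := by
    intro k hk
    have hk' := Finset.mem_range.1 hk
    have hle : (k:ℝ)/l ≤ ((k:ℝ)+1)/l := by gcongr; linarith
    have hend : (((k:ℝ)+1)/l) ∈ Set.Icc (0:ℝ) 1 := by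
      have := hmem (k+1) hk'
      push_cast at this
      exact this
    have e1 : g (((k:ℝ)+1)/l) - l * ∫ s in ((k:ℝ)/l)..(((k:ℝ)+1)/l), g s
        = l * ∫ s in ((k:ℝ)/l)..(((k:ℝ)+1)/l), (g (((k:ℝ)+1)/l) - g s) := by
      rw [intervalIntegral.integral_sub (intervalIntegrable_const) (hik k hk'),
        intervalIntegral.integral_const, smul_eq_mul]
      have hd : ((k:ℝ)+1)/l - (k:ℝ)/l = 1/l := by field_simp; ring
      rw [hd]
      field_simp
    rw [e1, abs_mul, abs_of_pos hl0]
    have hbound : ∀ s ∈ Set.uIoc ((k:ℝ)/l) (((k:ℝ)+1)/l),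
        ‖g (((k:ℝ)+1)/l) - g s‖ ≤ C/l := by
      intro s hs
      rw [Set.uIoc_of_le hle] at hs
      have hsmem : s ∈ Set.Icc (0:ℝ) 1 := by
        constructor
        · exact le_trans (hmem k hk'.le).1 hs.1.le
        · exact le_trans hs.2 hend.2
      have h1 : |g (((k:ℝ)+1)/l) - g s| ≤ C * |((k:ℝ)+1)/l - s| := hlip _ _ hend hsmem
      have h2 : |((k:ℝ)+1)/l - s| ≤ 1/l := by
        rw [abs_of_nonneg (by linarith [hs.2])]
        have : (k:ℝ)/l < s := hs.1
        have hd : ((k:ℝ)+1)/l - (k:ℝ)/l = 1/l := by field_simp; ring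
        linarith
      calc ‖g (((k:ℝ)+1)/l) - g s‖ = |g (((k:ℝ)+1)/l) - g s| := rfl
        _ ≤ C * |((k:ℝ)+1)/l - s| := h1
        _ ≤ C * (1/l) := by
            exact mul_le_mul_of_nonneg_left h2 hC
        _ = C/l := by ring
    have h3 := intervalIntegral.norm_integral_le_of_norm_le_const hbound
    have hd : |((k:ℝ)+1)/l - (k:ℝ)/l| = 1/l := by
      rw [abs_of_nonneg (by linarith)]
      field_simp; ring
    rw [hd] at h3
    calc (l:ℝ) * |∫ s in ((k:ℝ)/l)..(((k:ℝ)+1)/l), (g (((k:ℝ)+1)/l) - g s)|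
        ≤ l * (C/l * (1/l)) := by
          exact mul_le_mul_of_nonneg_left h3 hl0.le
      _ = C/l := by field_simp
  calc |(∑ j ∈ Finset.range l, g (((j:ℝ)+1)/l)) - l * ∫ s in (0:ℝ)..1, g s|
      = |∑ j ∈ Finset.range l, (g (((j:ℝ)+1)/l)
          - l * ∫ s in ((j:ℝ)/l)..(((j:ℝ)+1)/l), g s)| := by
        rw [Finset.sum_sub_distrib, ← Finset.mul_sum, hsum]
    _ ≤ ∑ j ∈ Finset.range l, |g (((j:ℝ)+1)/l)
          - l * ∫ s in ((j:ℝ)/l)..(((j:ℝ)+1)/l), g s| := Finset.abs_sum_le_sum_abs _ _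
    _ ≤ ∑ _j ∈ Finset.range l, C/l := Finset.sum_le_sum key
    _ = C := by
        rw [Finset.sum_const, Finset.card_range, nsmul_eq_mul]
        field_simp

/-- Double-sum asymptotic (display (sum.phi.quadratic) of the paper): for Lipschitz
functions `f₁, f₂` on `[0,∞)` vanishing on `[1,∞)`, with `Φ = ∫_0^1 f₁ f₂` and
`Ψ = ∫_0^1 s f₁(s) f₂(s) ds`, there is a constant `K` such that for all `p ≥ 1`,
`l ≥ 2` and `i ≥ 0`,
`| Σ_{h=i}^{i+pl-2} Σ_{h'=h+1}^{i+pl-1} f₁((h'-h)/l) f₂((h'-h)/l) - l² (p Φ - Ψ) | ≤ K p l`. -/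
theorem stmt_5 (f₁ f₂ : ℝ → ℝ) (L₁ L₂ : ℝ)
    (hlip₁ : ∀ a b : ℝ, 0 ≤ a → 0 ≤ b → |f₁ a - f₁ b| ≤ L₁ * |a - b|)
    (hlip₂ : ∀ a b : ℝ, 0 ≤ a → 0 ≤ b → |f₂ a - f₂ b| ≤ L₂ * |a - b|)
    (hvan₁ : ∀ t : ℝ, 1 ≤ t → f₁ t = 0)
    (hvan₂ : ∀ t : ℝ, 1 ≤ t → f₂ t = 0) :
    ∃ K : ℝ, ∀ p l : ℕ, 1 ≤ p → 2 ≤ l → ∀ i : ℕ,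
      |(∑ h ∈ Finset.Icc i (i + p * l - 2), ∑ h' ∈ Finset.Icc (h + 1) (i + p * l - 1),
            f₁ (((h' : ℝ) - h) / l) * f₂ (((h' : ℝ) - h) / l))
          - (l : ℝ) ^ 2 * ((p : ℝ) * (∫ s in (0:ℝ)..1, f₁ s * f₂ s)
            - ∫ s in (0:ℝ)..1, s * (f₁ s * f₂ s))| ≤ K * p * l := by
  set B₁ := |L₁| with hB₁
  set B₂ := |L₂| with hB₂
  have hB₁0 : 0 ≤ B₁ := abs_nonneg _
  have hB₂0 : 0 ≤ B₂ := abs_nonneg _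
  set Cg := 2 * B₁ * B₂ with hCg
  have hCg0 : 0 ≤ Cg := by positivity
  set Ch := 2 * Cg with hCh
  have hCh0 : 0 ≤ Ch := by positivity
  -- boundedness of f₁, f₂ on [0,1]
  have hbd₁ : ∀ s ∈ Set.Icc (0:ℝ) 1, |f₁ s| ≤ B₁ := by
    intro s hs
    have h1 : f₁ 1 = 0 := hvan₁ 1 le_rfl
    have h2 : |f₁ s - f₁ 1| ≤ L₁ * |s - 1| := hlip₁ s 1 hs.1 zero_le_one
    rw [h1, sub_zero] at h2
    have h3 : |s - 1| ≤ 1 := by rw [abs_le]; constructor <;> [linarith [hs.1]; linarith [hs.2]]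
    calc |f₁ s| ≤ L₁ * |s - 1| := h2
      _ ≤ B₁ * |s - 1| := by apply mul_le_mul_of_nonneg_right (le_abs_self L₁) (abs_nonneg _)
      _ ≤ B₁ * 1 := by exact mul_le_mul_of_nonneg_left h3 hB₁0
      _ = B₁ := mul_one _
  have hbd₂ : ∀ s ∈ Set.Icc (0:ℝ) 1, |f₂ s| ≤ B₂ := by
    intro s hs
    have h1 : f₂ 1 = 0 := hvan₂ 1 le_rfl
    have h2 : |f₂ s - f₂ 1| ≤ L₂ * |s - 1| := hlip₂ s 1 hs.1 zero_le_one
    rw [h1, sub_zero] at h2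
    have h3 : |s - 1| ≤ 1 := by rw [abs_le]; constructor <;> [linarith [hs.1]; linarith [hs.2]]
    calc |f₂ s| ≤ L₂ * |s - 1| := h2
      _ ≤ B₂ * |s - 1| := by apply mul_le_mul_of_nonneg_right (le_abs_self L₂) (abs_nonneg _)
      _ ≤ B₂ * 1 := by exact mul_le_mul_of_nonneg_left h3 hB₂0
      _ = B₂ := mul_one _
  -- Lipschitz bound for g = f₁ * f₂ on [0,1]
  have hlipg : ∀ a b : ℝ, a ∈ Set.Icc (0:ℝ) 1 → b ∈ Set.Icc (0:ℝ) 1 →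
      |f₁ a * f₂ a - f₁ b * f₂ b| ≤ Cg * |a - b| := by
    intro a b ha hb
    have e : f₁ a * f₂ a - f₁ b * f₂ b = f₁ a * (f₂ a - f₂ b) + f₂ b * (f₁ a - f₁ b) := by ring
    rw [e]
    have h1 : |f₁ a * (f₂ a - f₂ b)| ≤ B₁ * (B₂ * |a - b|) := by
      rw [abs_mul]
      have h2 : |f₂ a - f₂ b| ≤ B₂ * |a - b| := by
        calc |f₂ a - f₂ b| ≤ L₂ * |a - b| := hlip₂ a b ha.1 hb.1
          _ ≤ B₂ * |a - b| := mul_le_mul_of_nonneg_right (le_abs_self L₂) (abs_nonneg _)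
      exact mul_le_mul (hbd₁ a ha) h2 (abs_nonneg _) hB₁0
    have h3 : |f₂ b * (f₁ a - f₁ b)| ≤ B₂ * (B₁ * |a - b|) := by
      rw [abs_mul]
      have h4 : |f₁ a - f₁ b| ≤ B₁ * |a - b| := by
        calc |f₁ a - f₁ b| ≤ L₁ * |a - b| := hlip₁ a b ha.1 hb.1
          _ ≤ B₁ * |a - b| := mul_le_mul_of_nonneg_right (le_abs_self L₁) (abs_nonneg _)
      exact mul_le_mul (hbd₂ b hb) h4 (abs_nonneg _) hB₂0
    calc |f₁ a * (f₂ a - f₂ b) + f₂ b * (f₁ a - f₁ b)|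
        ≤ |f₁ a * (f₂ a - f₂ b)| + |f₂ b * (f₁ a - f₁ b)| := abs_add_le _ _
      _ ≤ B₁ * (B₂ * |a - b|) + B₂ * (B₁ * |a - b|) := add_le_add h1 h3
      _ = Cg * |a - b| := by rw [hCg]; ring
  have hg1 : f₁ 1 * f₂ 1 = 0 := by rw [hvan₁ 1 le_rfl, zero_mul]
  have hgbd : ∀ b ∈ Set.Icc (0:ℝ) 1, |f₁ b * f₂ b| ≤ Cg := by
    intro b hb
    have h1 := hlipg b 1 hb (by norm_num)
    rw [hg1, sub_zero] at h1
    have h3 : |b - 1| ≤ 1 := by rw [abs_le]; constructor <;> [linarith [hb.1]; linarith [hb.2]]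
    calc |f₁ b * f₂ b| ≤ Cg * |b - 1| := h1
      _ ≤ Cg * 1 := mul_le_mul_of_nonneg_left h3 hCg0
      _ = Cg := mul_one _
  have hliph : ∀ a b : ℝ, a ∈ Set.Icc (0:ℝ) 1 → b ∈ Set.Icc (0:ℝ) 1 →
      |a * (f₁ a * f₂ a) - b * (f₁ b * f₂ b)| ≤ Ch * |a - b| := by
    intro a b ha hb
    have e : a * (f₁ a * f₂ a) - b * (f₁ b * f₂ b)
        = a * (f₁ a * f₂ a - f₁ b * f₂ b) + (a - b) * (f₁ b * f₂ b) := by ring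
    rw [e]
    have h1 : |a * (f₁ a * f₂ a - f₁ b * f₂ b)| ≤ Cg * |a - b| := by
      rw [abs_mul]
      have ha1 : |a| ≤ 1 := by rw [abs_le]; exact ⟨by linarith [ha.1], ha.2⟩
      calc |a| * |f₁ a * f₂ a - f₁ b * f₂ b| ≤ 1 * (Cg * |a - b|) :=
          mul_le_mul ha1 (hlipg a b ha hb) (abs_nonneg _) zero_le_one
        _ = Cg * |a - b| := one_mul _
    have h2 : |(a - b) * (f₁ b * f₂ b)| ≤ Cg * |a - b| := by
      rw [abs_mul, mul_comm]
      exact mul_le_mul_of_nonneg_right (hgbd b hb) (abs_nonneg _)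
    calc |a * (f₁ a * f₂ a - f₁ b * f₂ b) + (a - b) * (f₁ b * f₂ b)|
        ≤ |a * (f₁ a * f₂ a - f₁ b * f₂ b)| + |(a - b) * (f₁ b * f₂ b)| := abs_add_le _ _
      _ ≤ Cg * |a - b| + Cg * |a - b| := add_le_add h1 h2
      _ = Ch * |a - b| := by rw [hCh]; ring
  refine ⟨Cg + Ch, fun p l hp hl i => ?_⟩
  have hN : 2 ≤ p * l := le_trans hl (Nat.le_mul_of_pos_left l hp)
  have hl1 : 1 ≤ l := le_trans (by norm_num) hl
  have hl0 : (0:ℝ) < l := by exact_mod_cast hl1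
  -- Step 1: double sum to single sum
  have hDS : (∑ h ∈ Finset.Icc i (i + p * l - 2), ∑ h' ∈ Finset.Icc (h + 1) (i + p * l - 1),
        f₁ (((h' : ℝ) - h) / l) * f₂ (((h' : ℝ) - h) / l))
      = ∑ j ∈ Finset.range (p*l-1), ((p*l-1-j : ℕ) : ℝ)
          * (f₁ (((j:ℝ)+1)/l) * f₂ (((j:ℝ)+1)/l)) :=
    double_sum_eq (fun t => f₁ (t / (l:ℝ)) * f₂ (t / (l:ℝ))) i (p*l) hN
  -- Step 2: restrict to range (l-1)
  have hres : ∑ j ∈ Finset.range (p*l-1), ((p*l-1-j : ℕ) : ℝ)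
          * (f₁ (((j:ℝ)+1)/l) * f₂ (((j:ℝ)+1)/l))
      = ∑ j ∈ Finset.range (l-1), ((p*l-1-j : ℕ) : ℝ)
          * (f₁ (((j:ℝ)+1)/l) * f₂ (((j:ℝ)+1)/l)) := by
    have hpl : l ≤ p * l := Nat.le_mul_of_pos_left l hp
    refine (Finset.sum_subset (Finset.range_subset_range.2 (by omega)) ?_).symm
    intro j hj hj'
    have hjl : l - 1 ≤ j := by
      by_contra hc
      exact hj' (Finset.mem_range.2 (by omega))
    have hge : (1:ℝ) ≤ ((j:ℝ)+1)/l := by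
      rw [le_div_iff₀ hl0, one_mul]
      have : l ≤ j + 1 := by omega
      exact_mod_cast this
    rw [hvan₁ _ hge, zero_mul, mul_zero]
  -- Step 3: split coefficients
  have hcoef : ∑ j ∈ Finset.range (l-1), ((p*l-1-j : ℕ) : ℝ)
          * (f₁ (((j:ℝ)+1)/l) * f₂ (((j:ℝ)+1)/l))
      = (p:ℝ)*l * (∑ j ∈ Finset.range (l-1), f₁ (((j:ℝ)+1)/l) * f₂ (((j:ℝ)+1)/l))
        - l * (∑ j ∈ Finset.range (l-1), ((j:ℝ)+1)/l * (f₁ (((j:ℝ)+1)/l) * f₂ (((j:ℝ)+1)/l))) := by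
    rw [Finset.mul_sum, Finset.mul_sum, ← Finset.sum_sub_distrib]
    refine Finset.sum_congr rfl fun j hj => ?_
    have hj' := Finset.mem_range.1 hj
    have hpl : l ≤ p * l := Nat.le_mul_of_pos_left l hp
    have h4 : p*l-1-j = p*l - (j+1) := by omega
    have h5 : j + 1 ≤ p * l := by omega
    rw [h4, Nat.cast_sub h5]
    push_cast
    field_simp
  -- Step 4: extend sums from range (l-1) to range l (last term vanishes)
  have hlast : f₁ ((((l-1:ℕ):ℝ)+1)/l) * f₂ ((((l-1:ℕ):ℝ)+1)/l) = 0 := by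
    have hc : (((l-1:ℕ):ℝ)+1)/l = 1 := by
      rw [Nat.cast_sub hl1]
      push_cast
      field_simp; ring
    rw [hc]
    exact hg1
  have hsucc : l - 1 + 1 = l := by omega
  have hT₀ : ∑ j ∈ Finset.range l, f₁ (((j:ℝ)+1)/l) * f₂ (((j:ℝ)+1)/l)
      = ∑ j ∈ Finset.range (l-1), f₁ (((j:ℝ)+1)/l) * f₂ (((j:ℝ)+1)/l) := by
    have h := Finset.sum_range_succ
      (fun j : ℕ => f₁ (((j:ℝ)+1)/l) * f₂ (((j:ℝ)+1)/l)) (l-1)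
    rw [hsucc] at h
    rw [h]
    rw [hlast, add_zero]
  have hT₁ : ∑ j ∈ Finset.range l, ((j:ℝ)+1)/l * (f₁ (((j:ℝ)+1)/l) * f₂ (((j:ℝ)+1)/l))
      = ∑ j ∈ Finset.range (l-1), ((j:ℝ)+1)/l * (f₁ (((j:ℝ)+1)/l) * f₂ (((j:ℝ)+1)/l)) := by
    have h := Finset.sum_range_succ
      (fun j : ℕ => ((j:ℝ)+1)/l * (f₁ (((j:ℝ)+1)/l) * f₂ (((j:ℝ)+1)/l))) (l-1)
    rw [hsucc] at h
    rw [h]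
    rw [hlast, mul_zero, add_zero]
  -- Riemann approximations
  have E₀ := riemann_approx (fun t => f₁ t * f₂ t) Cg hlipg l hl1
  have E₁ := riemann_approx (fun t => t * (f₁ t * f₂ t)) Ch hliph l hl1
  set Φ := ∫ s in (0:ℝ)..1, f₁ s * f₂ s with hΦ
  set Ψ := ∫ s in (0:ℝ)..1, s * (f₁ s * f₂ s) with hΨ
  set T₀ := ∑ j ∈ Finset.range l, f₁ (((j:ℝ)+1)/l) * f₂ (((j:ℝ)+1)/l) with hT₀d
  set T₁ := ∑ j ∈ Finset.range l, ((j:ℝ)+1)/l * (f₁ (((j:ℝ)+1)/l) * f₂ (((j:ℝ)+1)/l)) with hT₁d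
  have E₀' : |T₀ - l * Φ| ≤ Cg := E₀
  have E₁' : |T₁ - l * Ψ| ≤ Ch := E₁
  rw [hDS, hres, hcoef, ← hT₀, ← hT₁]
  have hkey : (p:ℝ)*l * T₀ - l * T₁ - (l:ℝ)^2 * ((p:ℝ) * Φ - Ψ)
      = (p:ℝ)*l * (T₀ - l * Φ) - l * (T₁ - l * Ψ) := by ring
  rw [hkey]
  have hp1 : (1:ℝ) ≤ p := by exact_mod_cast hp
  calc |(p:ℝ)*l * (T₀ - l * Φ) - l * (T₁ - l * Ψ)|
      ≤ |(p:ℝ)*l * (T₀ - l * Φ)| + |l * (T₁ - l * Ψ)| := abs_sub _ _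
    _ = (p:ℝ)*l * |T₀ - l * Φ| + l * |T₁ - l * Ψ| := by
        simp [abs_mul, Nat.abs_cast]

    _ ≤ (p:ℝ)*l * Cg + l * Ch := by
        refine add_le_add ?_ ?_
        · exact mul_le_mul_of_nonneg_left E₀' (by positivity)
        · exact mul_le_mul_of_nonneg_left E₁' hl0.le
    _ ≤ (Cg + Ch) * p * l := by
        nlinarith [mul_nonneg (mul_nonneg (sub_nonneg.2 hp1) hl0.le) hCh0]
end
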